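/- Second-moment estimate for the truncated variables (proof step 5, formula (10)): for every n ≥ 1, (1/n²) Σ_{k=1}^n 𝔼[Y_{n,k}²] ≤ 2 (1 + 1/n)² ∫_0^1 ψ_n(y) dy. -/

import Mathlib

open MeasureTheory Filter
open scoped ENNReal

noncomputable def upperExp {Ω : Type*} [MeasurableSpace Ω] (Ps : Set (Measure Ω)) (Z : Ω → ℝ) : ℝ :=
  ⨆ P : Ps, ∫ ω, Z ω ∂(P : Measure Ω)

noncomputable def lowerExp {Ω : Type*} [MeasurableSpace Ω] (Ps : Set (Measure Ω)) (Z : Ω → ℝ) : ℝ :=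
  ⨅ P : Ps, ∫ ω, Z ω ∂(P : Measure Ω)

noncomputable def upperCap {Ω : Type*} [MeasurableSpace Ω] (Ps : Set (Measure Ω)) (A : Set Ω) : ℝ :=
  ⨆ P : Ps, ((P : Measure Ω) A).toReal

noncomputable def lowerCap {Ω : Type*} [MeasurableSpace Ω] (Ps : Set (Measure Ω)) (A : Set Ω) : ℝ :=
  ⨅ P : Ps, ((P : Measure Ω) A).toReal

lemma upperCap_bddAbove {Ω : Type*} [MeasurableSpace Ω] (Ps : Set (Measure Ω))
    (hprob : ∀ P ∈ Ps, IsProbabilityMeasure P) (A : Set Ω) :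
    BddAbove (Set.range fun P : Ps => ((P : Measure Ω) A).toReal) := by
  refine ⟨1, ?_⟩
  rintro x ⟨P, rfl⟩
  haveI := hprob P P.2
  calc ((P : Measure Ω) A).toReal ≤ (1 : ℝ≥0∞).toReal :=
        ENNReal.toReal_mono ENNReal.one_ne_top prob_le_one
    _ = 1 := ENNReal.toReal_one

lemma le_upperCap {Ω : Type*} [MeasurableSpace Ω] (Ps : Set (Measure Ω))
    (hprob : ∀ P ∈ Ps, IsProbabilityMeasure P) (A : Set Ω) {P : Measure Ω} (hP : P ∈ Ps) :
    (P A).toReal ≤ upperCap Ps A :=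
  le_ciSup (upperCap_bddAbove Ps hprob A) (⟨P, hP⟩ : Ps)

lemma upperCap_le_one {Ω : Type*} [MeasurableSpace Ω] (Ps : Set (Measure Ω)) (hne : Ps.Nonempty)
    (hprob : ∀ P ∈ Ps, IsProbabilityMeasure P) (A : Set Ω) : upperCap Ps A ≤ 1 := by
  haveI : Nonempty Ps := hne.to_subtype
  apply ciSup_le
  intro P
  haveI := hprob P P.2
  calc ((P : Measure Ω) A).toReal ≤ (1 : ℝ≥0∞).toReal :=
        ENNReal.toReal_mono ENNReal.one_ne_top prob_le_one
    _ = 1 := ENNReal.toReal_one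

lemma upperCap_nonneg {Ω : Type*} [MeasurableSpace Ω] (Ps : Set (Measure Ω)) (hne : Ps.Nonempty)
    (hprob : ∀ P ∈ Ps, IsProbabilityMeasure P) (A : Set Ω) : 0 ≤ upperCap Ps A := by
  obtain ⟨P, hP⟩ := hne
  exact le_trans ENNReal.toReal_nonneg (le_upperCap Ps hprob A hP)

instance : IsFiniteMeasure (volume.restrict (Set.Icc (0:ℝ) 1)) := by
  constructor
  rw [Measure.restrict_apply_univ, Real.volume_Icc]
  exact ENNReal.ofReal_lt_top

lemma Vfun_integrable {Ω : Type*} [MeasurableSpace Ω] (Ps : Set (Measure Ω)) (hne : Ps.Nonempty)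
    (hprob : ∀ P ∈ Ps, IsProbabilityMeasure P) (f : Ω → ℝ) (c : ℝ) (hc : 0 ≤ c) :
    IntegrableOn (fun y => y * upperCap Ps {ω | c * y < |f ω|}) (Set.Icc (0:ℝ) 1) volume := by
  haveI : Nonempty Ps := hne.to_subtype
  have hanti : Antitone (fun y => upperCap Ps {ω | c * y < |f ω|}) := by
    intro y1 y2 h12
    apply ciSup_mono (upperCap_bddAbove Ps hprob _)
    intro P
    haveI := hprob P P.2
    apply ENNReal.toReal_mono (measure_ne_top _ _)
    apply measure_mono
    intro ω hω
    exact lt_of_le_of_lt (mul_le_mul_of_nonneg_left h12 hc) hω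
  have hmeas : Measurable (fun y => y * upperCap Ps {ω | c * y < |f ω|}) :=
    measurable_id.mul hanti.measurable
  refine Integrable.mono' (integrable_const 1) hmeas.aestronglyMeasurable ?_
  filter_upwards [ae_restrict_mem measurableSet_Icc] with y hy
  rw [Real.norm_eq_abs, abs_of_nonneg (mul_nonneg hy.1 (upperCap_nonneg Ps hne hprob _))]
  calc y * upperCap Ps {ω | c * y < |f ω|} ≤ 1 * 1 :=
        mul_le_mul hy.2 (upperCap_le_one Ps hne hprob _) (upperCap_nonneg Ps hne hprob _) zero_le_one
    _ = 1 := one_mul 1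

lemma key_integral (c nn : ℝ) (hnn : 0 < nn) :
    ∫ y in Set.Icc (0:ℝ) 1, (if nn * y < c then y else 0) =
      max 0 (min (c / nn) 1) ^ 2 / 2 := by
  have h1 : (fun y : ℝ => if nn * y < c then y else 0)
      = Set.indicator (Set.Iio (c / nn)) (fun y => y) := by
    funext y
    rw [Set.indicator_apply]
    simp [Set.mem_Iio, lt_div_iff₀ hnn, mul_comm]
  rw [h1, setIntegral_indicator measurableSet_Iio]
  set b := c / nn with hb
  rcases le_or_gt b 0 with hb0 | hb0
  · have he : Set.Icc (0:ℝ) 1 ∩ Set.Iio b = ∅ := by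
      ext y; simp only [Set.mem_inter_iff, Set.mem_Icc, Set.mem_Iio, Set.mem_empty_iff_false,
        iff_false, not_and]
      rintro ⟨h0, _⟩ hy; linarith
    rw [he]
    have : max 0 (min b 1) = 0 := by
      rw [max_eq_left]; exact le_trans (min_le_left _ _) hb0
    simp [this]
  rcases le_or_gt b 1 with hb1 | hb1
  · have he : Set.Icc (0:ℝ) 1 ∩ Set.Iio b = Set.Ico 0 b := by
      ext y; simp only [Set.mem_inter_iff, Set.mem_Icc, Set.mem_Iio, Set.mem_Ico]
      constructor
      · rintro ⟨⟨h0, _⟩, h2⟩; exact ⟨h0, h2⟩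
      · rintro ⟨h0, h2⟩; exact ⟨⟨h0, by linarith⟩, h2⟩
    rw [he, setIntegral_congr_set Ico_ae_eq_Ioc, ← intervalIntegral.integral_of_le hb0.le,
      integral_id]
    have : max 0 (min b 1) = b := by
      rw [min_eq_left hb1, max_eq_right hb0.le]
    rw [this]; ring
  · have he : Set.Icc (0:ℝ) 1 ∩ Set.Iio b = Set.Icc 0 1 := by
      rw [Set.inter_eq_left]; intro y hy; exact lt_of_le_of_lt hy.2 hb1
    rw [he, integral_Icc_eq_integral_Ioc, ← intervalIntegral.integral_of_le zero_le_one,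
      integral_id]
    have : max 0 (min b 1) = 1 := by
      rw [min_eq_right hb1.le, max_eq_right zero_le_one]
    rw [this]; ring

lemma aux_key {Ω : Type*} [MeasurableSpace Ω] (Ps : Set (Measure Ω)) (hne : Ps.Nonempty)
    (hprob : ∀ P ∈ Ps, IsProbabilityMeasure P)
    (f : Ω → ℝ) (hf : Measurable f)
    (g : Ω → ℝ) (hg : Measurable g)
    (n : ℕ) (hn : 1 ≤ n)
    (hgle : ∀ ω, |g ω| ≤ |f ω|)
    (hgz : ∀ ω, (n : ℝ) + 1 ≤ |f ω| → g ω = 0) :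
    upperExp Ps (fun ω => g ω ^ 2) ≤
      2 * ((n : ℝ) + 1) ^ 2 *
        ∫ y in Set.Icc (0:ℝ) 1, y * upperCap Ps {ω | (n : ℝ) * y < |f ω|} := by
  haveI : Nonempty Ps := hne.to_subtype
  have hn0 : (0:ℝ) < (n : ℝ) := by exact_mod_cast hn
  set nr : ℝ := (n : ℝ) with hnr
  set ν : Measure ℝ := volume.restrict (Set.Icc (0:ℝ) 1) with hν
  set F : Ω → ℝ → ℝ := fun ω y => if nr * y < |f ω| then y else 0 with hF
  -- pointwise bound
  have hpt : ∀ ω, g ω ^ 2 ≤ 2 * (nr + 1) ^ 2 * ∫ y, F ω y ∂ν := by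
    intro ω
    have hki : ∫ y, F ω y ∂ν = max 0 (min (|f ω| / nr) 1) ^ 2 / 2 := key_integral _ _ hn0
    rw [hki]
    set a := max 0 (min (|f ω| / nr) 1) with ha
    rcases le_or_gt (nr + 1) (|f ω|) with h | h
    · rw [hgz ω h]
      have ha0 : 0 ≤ a := le_max_left _ _
      nlinarith
    · have h1 : g ω ^ 2 ≤ |f ω| ^ 2 := by
        have h2 := hgle ω
        nlinarith [abs_nonneg (g ω), sq_abs (g ω), sq_abs (f ω)]
      have h2 : |f ω| ^ 2 ≤ 2 * (nr + 1) ^ 2 * (a ^ 2 / 2) := by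
        have hf0 : 0 ≤ |f ω| := abs_nonneg _
        rcases le_or_gt (|f ω|) nr with hfn | hfn
        · have haa : a = |f ω| / nr := by
            rw [ha, min_eq_left (by rw [div_le_one hn0]; exact hfn),
              max_eq_right (by positivity)]
          rw [haa, div_pow]
          have h4 : 2 * (nr + 1) ^ 2 * (|f ω| ^ 2 / nr ^ 2 / 2)
              = (nr + 1) ^ 2 * |f ω| ^ 2 / nr ^ 2 := by ring
          rw [h4, le_div_iff₀ (by positivity)]
          nlinarith [sq_nonneg (|f ω|)]
        · have haa : a = 1 := by
            rw [ha, min_eq_right (by rw [le_div_iff₀ hn0]; linarith), max_eq_right zero_le_one]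
          rw [haa]
          nlinarith
      linarith
  -- conclude
  rw [upperExp]
  apply ciSup_le
  rintro ⟨P, hP⟩
  haveI := hprob P hP
  -- integrability facts
  have hgb : ∀ ω, |g ω| ≤ nr + 1 := by
    intro ω
    rcases le_or_gt (nr + 1) (|f ω|) with h | h
    · rw [hgz ω h]; simp; linarith
    · exact le_trans (hgle ω) h.le
  have hgint : Integrable (fun ω => g ω ^ 2) P := by
    refine Integrable.mono' (integrable_const ((nr + 1) ^ 2))
      ((hg.pow_const 2).aestronglyMeasurable) (ae_of_all _ fun ω => ?_)
    rw [Real.norm_eq_abs, abs_of_nonneg (sq_nonneg _)]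
    have := hgb ω
    nlinarith [abs_nonneg (g ω), sq_abs (g ω)]
  have hS : MeasurableSet {p : Ω × ℝ | nr * p.2 < |f p.1|} :=
    measurableSet_lt (measurable_const.mul measurable_snd) ((hf.comp measurable_fst).abs)
  have hFmeas : Measurable (Function.uncurry F) :=
    Measurable.ite hS measurable_snd measurable_const
  have hmem2 : ∀ᵐ p ∂(P.prod ν), p.2 ∈ Set.Icc (0:ℝ) 1 := by
    rw [ae_iff]
    have hcs : {p : Ω × ℝ | ¬ p.2 ∈ Set.Icc (0:ℝ) 1} = Set.univ ×ˢ (Set.Icc (0:ℝ) 1)ᶜ := by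
      ext p; simp
    rw [hcs, Measure.prod_prod, hν, Measure.restrict_apply measurableSet_Icc.compl]
    simp
  have hFint : Integrable (Function.uncurry F) (P.prod ν) := by
    refine Integrable.mono' (integrable_const 1) hFmeas.aestronglyMeasurable ?_
    filter_upwards [hmem2] with p hp
    simp only [Function.uncurry, hF, Real.norm_eq_abs]
    split
    · rw [abs_of_nonneg hp.1]; exact hp.2
    · simp
  have hinner : ∀ y : ℝ, ∫ ω, F ω y ∂P = y * (P {ω | nr * y < |f ω|}).toReal := by
    intro y
    have hfy : (fun ω => F ω y) = Set.indicator {ω | nr * y < |f ω|} (fun _ => y) := by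
      funext ω
      rw [Set.indicator_apply]
      rfl
    rw [hfy, integral_indicator_const _ (measurableSet_lt measurable_const hf.abs), smul_eq_mul,
      mul_comm]
    rfl
  calc ∫ ω, g ω ^ 2 ∂P
      ≤ ∫ ω, 2 * (nr + 1) ^ 2 * ∫ y, F ω y ∂ν ∂P := by
        refine integral_mono hgint ?_ hpt
        exact (hFint.integral_prod_left).const_mul _
    _ = 2 * (nr + 1) ^ 2 * ∫ ω, (∫ y, F ω y ∂ν) ∂P := integral_const_mul _ _
    _ = 2 * (nr + 1) ^ 2 * ∫ y, (∫ ω, F ω y ∂P) ∂ν := by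
        rw [integral_integral_swap hFint]
    _ = 2 * (nr + 1) ^ 2 * ∫ y, y * (P {ω | nr * y < |f ω|}).toReal ∂ν := by
        simp only [hinner]
    _ ≤ 2 * (nr + 1) ^ 2 * ∫ y, y * upperCap Ps {ω | nr * y < |f ω|} ∂ν := by
        apply mul_le_mul_of_nonneg_left _ (by positivity)
        apply integral_mono_ae
        · exact (hFint.integral_prod_right).congr (ae_of_all _ hinner)
        · exact Vfun_integrable Ps hne hprob f nr hn0.le
        · filter_upwards [ae_restrict_mem measurableSet_Icc] with y hy
          exact mul_le_mul_of_nonneg_left (le_upperCap Ps hprob _ hP) hy.1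

/-- second-moment estimate for the truncated variables (proof step 5,
formula (10)): for every `n ≥ 1`,
`(1/n²) Σ_{k=1}^n 𝔼[Y_{n,k}²] ≤ 2 (1 + 1/n)² ∫_0^1 ψ_n(y) dy`. -/
theorem truncated_second_moment_estimate
    {Ω : Type*} [MeasurableSpace Ω] (Ps : Set (Measure Ω)) (hne : Ps.Nonempty)
    (hprob : ∀ P ∈ Ps, IsProbabilityMeasure P)
    (X : ℕ → Ω → ℝ) (hX : ∀ k, Measurable (X k))
    (χ : ℕ → ℝ → ℝ)
    (hχLip : ∀ n, ∃ K : NNReal, LipschitzWith K (χ n))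
    (hχone : ∀ n : ℕ, ∀ x : ℝ, |x| ≤ (n : ℝ) → χ n x = 1)
    (hχzero : ∀ n : ℕ, ∀ x : ℝ, (n : ℝ) + 1 ≤ |x| → χ n x = 0)
    (hχrange : ∀ n : ℕ, ∀ x : ℝ, χ n x ∈ Set.Icc (0 : ℝ) 1)
    (Y : ℕ → ℕ → Ω → ℝ) (hY : ∀ n k, Y n k = fun ω => X k ω * χ n |X k ω|)
    (ψ : ℕ → ℝ → ℝ)
    (hψ : ∀ n : ℕ, ∀ y : ℝ, ψ n y = ∑ k ∈ Finset.Icc 1 n, y * upperCap Ps {ω | (n : ℝ) * y < |X k ω|}) :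
    ∀ n : ℕ, 1 ≤ n →
      (1 / (n : ℝ) ^ 2) * ∑ k ∈ Finset.Icc 1 n, upperExp Ps (fun ω => Y n k ω ^ 2) ≤
        2 * (1 + 1 / (n : ℝ)) ^ 2 * ∫ y in Set.Icc (0 : ℝ) 1, ψ n y := by
  intro n hn
  have hn0 : (0:ℝ) < (n : ℝ) := by exact_mod_cast hn
  -- properties of Y
  have hYm : ∀ k, Measurable (Y n k) := by
    intro k
    rw [hY]
    obtain ⟨K, hK⟩ := hχLip n
    exact (hX k).mul (hK.continuous.measurable.comp (hX k).abs)
  have hYle : ∀ k ω, |Y n k ω| ≤ |X k ω| := by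
    intro k ω
    rw [hY]
    simp only [abs_mul]
    have h := hχrange n (|X k ω|)
    calc |X k ω| * |χ n (|X k ω|)| ≤ |X k ω| * 1 := by
          refine mul_le_mul_of_nonneg_left ?_ (abs_nonneg _)
          rw [abs_le]; exact ⟨by linarith [h.1], h.2⟩
      _ = |X k ω| := mul_one _
  have hYz : ∀ k ω, (n : ℝ) + 1 ≤ |X k ω| → Y n k ω = 0 := by
    intro k ω h
    rw [hY]
    show X k ω * χ n |X k ω| = 0
    rw [hχzero n (|X k ω|) (by rwa [abs_abs]), mul_zero]
  have hkey : ∀ k, upperExp Ps (fun ω => Y n k ω ^ 2) ≤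
      2 * ((n : ℝ) + 1) ^ 2 *
        ∫ y in Set.Icc (0:ℝ) 1, y * upperCap Ps {ω | (n : ℝ) * y < |X k ω|} :=
    fun k => aux_key Ps hne hprob (X k) (hX k) (Y n k) (hYm k) n hn (hYle k) (hYz k)
  have hψint : ∫ y in Set.Icc (0:ℝ) 1, ψ n y =
      ∑ k ∈ Finset.Icc 1 n, ∫ y in Set.Icc (0:ℝ) 1,
        y * upperCap Ps {ω | (n : ℝ) * y < |X k ω|} := by
    rw [show (fun y => ψ n y) = fun y => ∑ k ∈ Finset.Icc 1 n,
        y * upperCap Ps {ω | (n : ℝ) * y < |X k ω|} from funext (hψ n)]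
    exact integral_finset_sum _ fun k _ => Vfun_integrable Ps hne hprob (X k) _ hn0.le
  rw [hψint]
  have hJnn : ∀ k ∈ Finset.Icc 1 n, 0 ≤ ∫ y in Set.Icc (0:ℝ) 1,
      y * upperCap Ps {ω | (n : ℝ) * y < |X k ω|} := by
    intro k _
    apply setIntegral_nonneg measurableSet_Icc
    intro y hy
    exact mul_nonneg hy.1 (upperCap_nonneg Ps hne hprob _)
  calc (1 / (n : ℝ) ^ 2) * ∑ k ∈ Finset.Icc 1 n, upperExp Ps (fun ω => Y n k ω ^ 2)
      ≤ (1 / (n : ℝ) ^ 2) * ∑ k ∈ Finset.Icc 1 n, (2 * ((n : ℝ) + 1) ^ 2 *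
          ∫ y in Set.Icc (0:ℝ) 1, y * upperCap Ps {ω | (n : ℝ) * y < |X k ω|}) := by
        refine mul_le_mul_of_nonneg_left (Finset.sum_le_sum fun k _ => hkey k) (by positivity)
    _ = 2 * (1 + 1 / (n : ℝ)) ^ 2 * ∑ k ∈ Finset.Icc 1 n,
          ∫ y in Set.Icc (0:ℝ) 1, y * upperCap Ps {ω | (n : ℝ) * y < |X k ω|} := by
        rw [← Finset.mul_sum, ← mul_assoc, ← mul_assoc]
        congr 1
        field_simp
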